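/- Partial free cumulant expansion: for noncrossing partitions ρ ≤ σ in NC_n, the partial cumulant C_{ρ,σ} := ∑_{ρ ≤ π ≤ σ} φ_π μ(π, σ) satisfies C_{ρ,σ}(X_1,…,X_n) = ∑_{τ ∈ NC_n : τ ∨ ρ = σ} C_τ(X_1,…,X_n), where ∨ is the join in NC_n. -/

import Mathlib

open scoped Classical

instance {α : Type*} [Finite α] : Finite (Setoid α) :=
  Finite.of_injective (fun s : Setoid α => s.r) fun s t h => by
    cases s; cases t; congr

noncomputable instance {α : Type*} [Finite α] : Fintype (Setoid α) := Fintype.ofFinite _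

/-- The blocks (equivalence classes) of a partition, as a finset of finsets. -/
noncomputable def blocks {α : Type*} [Fintype α] (π : Setoid α) : Finset (Finset α) :=
  Finset.univ.image (fun i => Finset.univ.filter (fun j => π.r i j))

/-- The ordered (noncommutative) product of the variables `X i`, `i ∈ b`,
taken in increasing order of the indices. -/
noncomputable def orderedProd {α A : Type*} [LinearOrder α] [Ring A] (b : Finset α)
    (X : α → A) : A :=
  ((b.sort (· ≤ ·)).map X).prod

/-- A partition of `{1,…,n}` (as a setoid on `Fin n`) is noncrossing if there are no
`i < j < k < l` with `i ∼ k`, `j ∼ l` but `i ≁ j`. -/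
def IsNoncrossing {n : ℕ} (π : Setoid (Fin n)) : Prop :=
  ¬ ∃ i j k l : Fin n, i < j ∧ j < k ∧ k < l ∧ π.r i k ∧ π.r j l ∧ ¬ π.r i j

/-- The noncrossing partition lattice `NC_n` (as a subtype of setoids on `Fin n`). -/
abbrev NCPart (n : ℕ) := {π : Setoid (Fin n) // IsNoncrossing π}

lemma sInf_noncrossing {n : ℕ} (S : Set (Setoid (Fin n)))
    (h : ∀ s ∈ S, IsNoncrossing s) : IsNoncrossing (sInf S) := by
  rintro ⟨i, j, k, l, hij, hjk, hkl, hik, hjl, hnij⟩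
  refine hnij fun s hs => ?_
  by_contra hc
  exact h s hs ⟨i, j, k, l, hij, hjk, hkl, Setoid.sInf_iff.mp hik s hs,
    Setoid.sInf_iff.mp hjl s hs, hc⟩

/-- The join of two noncrossing partitions, as the inf of common noncrossing coarsenings. -/
noncomputable def NCjoin {n : ℕ} (τ ρ : NCPart n) : NCPart n :=
  ⟨sInf {s : Setoid (Fin n) | IsNoncrossing s ∧ τ.1 ≤ s ∧ ρ.1 ≤ s},
    sInf_noncrossing _ fun _ hs => hs.1⟩

lemma le_NCjoin_left {n : ℕ} (τ ρ : NCPart n) : τ ≤ NCjoin τ ρ := by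
  rw [← Subtype.coe_le_coe]
  exact le_sInf fun s hs => hs.2.1

lemma le_NCjoin_right {n : ℕ} (τ ρ : NCPart n) : ρ ≤ NCjoin τ ρ := by
  rw [← Subtype.coe_le_coe]
  exact le_sInf fun s hs => hs.2.2

lemma NCjoin_le {n : ℕ} {τ ρ κ : NCPart n} (h1 : τ ≤ κ) (h2 : ρ ≤ κ) :
    NCjoin τ ρ ≤ κ := by
  rw [← Subtype.coe_le_coe]
  exact sInf_le ⟨κ.2, h1, h2⟩

lemma NCjoin_isLUB {n : ℕ} (τ ρ : NCPart n) :
    IsLUB ({τ, ρ} : Set (NCPart n)) (NCjoin τ ρ) := by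
  constructor
  · rintro x hx
    rcases hx with rfl | hx
    · exact le_NCjoin_left _ _
    · rcases hx with rfl
      exact le_NCjoin_right _ _
  · intro κ hκ
    exact NCjoin_le (hκ (Set.mem_insert _ _)) (hκ (Set.mem_insert_of_mem _ rfl))

lemma NCjoin_le_iff {n : ℕ} (τ ρ κ : NCPart n) :
    NCjoin τ ρ ≤ κ ↔ τ ≤ κ ∧ ρ ≤ κ :=
  ⟨fun h => ⟨le_trans (le_NCjoin_left τ ρ) h, le_trans (le_NCjoin_right τ ρ) h⟩,
    fun ⟨h1, h2⟩ => NCjoin_le h1 h2⟩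

/-- Complex-valued indicator of a proposition. -/
noncomputable def ind (p : Prop) : ℂ := if p then 1 else 0

lemma ind_eq (p : Prop) [Decidable p] : ind p = if p then 1 else 0 := by
  by_cases h : p <;> simp [ind, h]

lemma ite_eq_ind_mul {p : Prop} [Decidable p] (x : ℂ) :
    (if p then x else 0) = ind p * x := by
  by_cases h : p <;> simp [ind, h]
/-- Partial free cumulants: for `ρ ≤ σ` in `NC_n`,
`C_{ρ,σ} := ∑_{ρ ≤ π ≤ σ} φ_π μ(π,σ)` equals `∑_{τ : τ ∨ ρ = σ} C_τ`,
where `∨` is the join in `NC_n` and `φ_π` is the multiplicative partitioned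
moment functional of a noncommutative probability space `(A, φ)`. -/
theorem stmt9 {n : ℕ} {A : Type*} [Ring A] [Algebra ℂ A]
    (φ : A →ₗ[ℂ] ℂ) (hφ : φ 1 = 1)
    (X : Fin n → A)
    -- the Möbius function of `NC_n`
    (mu : NCPart n → NCPart n → ℂ)
    (hmu : ∀ π σ : NCPart n, π ≤ σ →
      (∑ ρ ∈ Finset.univ.filter (fun ρ => π ≤ ρ ∧ ρ ≤ σ), mu ρ σ) =
        if π = σ then 1 else 0)
    -- partitioned moments
    (φP : NCPart n → ℂ)
    (hφP : ∀ π, φP π = ∏ b ∈ blocks π.val, φ (orderedProd b X))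
    -- free cumulants
    (C : NCPart n → ℂ)
    (hC : ∀ τ, C τ = ∑ π ∈ Finset.univ.filter (fun π => π ≤ τ), φP π * mu π τ)
    (ρ σ : NCPart n) (hle : ρ ≤ σ) :
    (∑ π ∈ Finset.univ.filter (fun π => ρ ≤ π ∧ π ≤ σ), φP π * mu π σ)
      = ∑ τ ∈ Finset.univ.filter (fun τ => IsLUB ({τ, ρ} : Set (NCPart n)) σ), C τ := by
  classical
  -- dual Möbius identity via matrix inverse commutation
  have dual : ∀ π κ : NCPart n,
      (∑ τ : NCPart n, ind (π ≤ τ) * ind (τ ≤ κ) * mu π τ) = ind (π = κ) := by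
    have hZM : (Matrix.of fun a b : NCPart n => ind (a ≤ b)) *
        (Matrix.of fun a b : NCPart n => ind (a ≤ b) * mu a b) = 1 := by
      ext a b
      rw [Matrix.mul_apply, Matrix.one_apply]
      by_cases hab : a ≤ b
      · rw [← hmu a b hab, Finset.sum_filter]
        refine Finset.sum_congr rfl fun c _ => ?_
        by_cases h1 : a ≤ c <;> by_cases h2 : c ≤ b <;>
          simp [Matrix.of_apply, ind, h1, h2]
      · have hne : a ≠ b := fun h => hab (le_of_eq h)
        rw [if_neg hne]
        refine Finset.sum_eq_zero fun c _ => ?_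
        by_cases h1 : a ≤ c
        · have h2 : ¬ c ≤ b := fun h2 => hab (h1.trans h2)
          simp [Matrix.of_apply, ind, h2]
        · simp [Matrix.of_apply, ind, h1]
    have hMZ := mul_eq_one_comm.mp hZM
    intro π κ
    have h : ((Matrix.of fun a b : NCPart n => ind (a ≤ b) * mu a b) *
        (Matrix.of fun a b : NCPart n => ind (a ≤ b))) π κ
          = (1 : Matrix (NCPart n) (NCPart n) ℂ) π κ := by rw [hMZ]
    rw [Matrix.mul_apply, Matrix.one_apply] at h
    rw [ind_eq, ← h]
    refine Finset.sum_congr rfl fun c _ => ?_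
    simp only [Matrix.of_apply]
    ring
  -- the indicator of the LUB condition as a Möbius sum
  have key1 : ∀ τ : NCPart n, ind (IsLUB ({τ, ρ} : Set (NCPart n)) σ)
      = ∑ κ : NCPart n, ind (τ ≤ κ) * ind (ρ ≤ κ) * ind (κ ≤ σ) * mu κ σ := by
    intro τ
    by_cases hτσ : τ ≤ σ
    · have hJσ : NCjoin τ ρ ≤ σ := (NCjoin_le_iff τ ρ σ).mpr ⟨hτσ, hle⟩
      have hiff : IsLUB ({τ, ρ} : Set (NCPart n)) σ ↔ NCjoin τ ρ = σ :=
        ⟨fun h => (NCjoin_isLUB τ ρ).unique h, fun h => h ▸ NCjoin_isLUB τ ρ⟩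
      have h1 := hmu (NCjoin τ ρ) σ hJσ
      rw [Finset.sum_filter] at h1
      calc ind (IsLUB ({τ, ρ} : Set (NCPart n)) σ)
          = ind (NCjoin τ ρ = σ) := congrArg ind (propext hiff)
        _ = ∑ κ : NCPart n, if NCjoin τ ρ ≤ κ ∧ κ ≤ σ then mu κ σ else 0 := by
            rw [ind_eq]; exact h1.symm
        _ = ∑ κ : NCPart n, ind (τ ≤ κ) * ind (ρ ≤ κ) * ind (κ ≤ σ) * mu κ σ := by
            refine Finset.sum_congr rfl fun κ _ => ?_
            by_cases ha : τ ≤ κ <;> by_cases hb : ρ ≤ κ <;> by_cases hc : κ ≤ σ <;>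
              simp [ind, ha, hb, hc, NCjoin_le_iff]
    · have h1 : ¬ IsLUB ({τ, ρ} : Set (NCPart n)) σ :=
        fun h => hτσ (h.1 (Set.mem_insert _ _))
      rw [ind, if_neg h1]
      symm
      refine Finset.sum_eq_zero fun κ _ => ?_
      by_cases ha : τ ≤ κ
      · have hc : ¬ κ ≤ σ := fun hc => hτσ (ha.trans hc)
        simp [ind, hc]
      · simp [ind, ha]
  -- the main computation
  calc (∑ π ∈ Finset.univ.filter (fun π => ρ ≤ π ∧ π ≤ σ), φP π * mu π σ)
      = ∑ κ : NCPart n, ind (ρ ≤ κ) * ind (κ ≤ σ) * mu κ σ * φP κ := by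
        rw [Finset.sum_filter]
        refine Finset.sum_congr rfl fun κ _ => ?_
        by_cases ha : ρ ≤ κ <;> by_cases hb : κ ≤ σ <;> simp [ind, ha, hb] <;> ring
    _ = ∑ κ : NCPart n, ∑ π : NCPart n,
          ind (ρ ≤ κ) * ind (κ ≤ σ) * mu κ σ * (φP π * ind (π = κ)) := by
        refine Finset.sum_congr rfl fun κ _ => ?_
        rw [← Finset.mul_sum]
        congr 1
        rw [Finset.sum_congr rfl (fun π _ => show φP π * ind (π = κ)
          = if π = κ then φP κ else 0 by
            by_cases h : π = κ <;> simp [ind, h])]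
        simp
    _ = ∑ κ : NCPart n, ∑ π : NCPart n, ind (ρ ≤ κ) * ind (κ ≤ σ) * mu κ σ *
          (φP π * (∑ τ : NCPart n, ind (π ≤ τ) * ind (τ ≤ κ) * mu π τ)) := by
        refine Finset.sum_congr rfl fun κ _ => Finset.sum_congr rfl fun π _ => ?_
        rw [dual]
    _ = ∑ κ : NCPart n, ∑ π : NCPart n, ∑ τ : NCPart n,
          ind (ρ ≤ κ) * ind (κ ≤ σ) * mu κ σ *
            (φP π * (ind (π ≤ τ) * ind (τ ≤ κ) * mu π τ)) := by
        refine Finset.sum_congr rfl fun κ _ => Finset.sum_congr rfl fun π _ => ?_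
        rw [← Finset.mul_sum, ← Finset.mul_sum]
    _ = ∑ τ : NCPart n, ∑ κ : NCPart n, ∑ π : NCPart n,
          ind (ρ ≤ κ) * ind (κ ≤ σ) * mu κ σ *
            (φP π * (ind (π ≤ τ) * ind (τ ≤ κ) * mu π τ)) := by
        trans (∑ κ : NCPart n, ∑ τ : NCPart n, ∑ π : NCPart n,
          ind (ρ ≤ κ) * ind (κ ≤ σ) * mu κ σ *
            (φP π * (ind (π ≤ τ) * ind (τ ≤ κ) * mu π τ)))
        · exact Finset.sum_congr rfl fun κ _ => Finset.sum_comm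
        · exact Finset.sum_comm
    _ = ∑ τ : NCPart n,
          (∑ κ : NCPart n, ind (τ ≤ κ) * ind (ρ ≤ κ) * ind (κ ≤ σ) * mu κ σ) *
          (∑ π : NCPart n, ind (π ≤ τ) * (φP π * mu π τ)) := by
        refine Finset.sum_congr rfl fun τ _ => ?_
        rw [Finset.sum_mul_sum]
        refine Finset.sum_congr rfl fun κ _ => Finset.sum_congr rfl fun π _ => ?_
        ring
    _ = ∑ τ ∈ Finset.univ.filter
          (fun τ => IsLUB ({τ, ρ} : Set (NCPart n)) σ), C τ := by
        rw [Finset.sum_filter]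
        refine Finset.sum_congr rfl fun τ _ => ?_
        rw [← key1, hC τ, Finset.sum_filter]
        have h2 : (∑ π : NCPart n, if π ≤ τ then φP π * mu π τ else 0)
            = ∑ π : NCPart n, ind (π ≤ τ) * (φP π * mu π τ) := by
          refine Finset.sum_congr rfl fun π _ => ?_
          by_cases h : π ≤ τ <;> simp [ind, h]
        rw [h2]
        by_cases h : IsLUB ({τ, ρ} : Set (NCPart n)) σ <;> simp [ind, h]
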